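/- Let a, b ≥ 1 and let R be a Hermitian operator on ℂ^a ⊗ ℂ^b with trace 1. Then there exist finitely many unit vectors u_j ∈ ℂ^a and v_j ∈ ℂ^b and real numbers P_j with Σ_j P_j = 1 such that R = Σ_j P_j (|u_j⟩⟨u_j| ⊗ |v_j⟩⟨v_j|). -/

import Mathlib

open Matrix
open scoped Kronecker

namespace QPaux

variable {n : Type*} [Fintype n] [DecidableEq n]

/-- The set of rank-one projections onto unit vectors. -/
def projSet (n : Type*) [Fintype n] : Set (Matrix n n ℂ) :=
  {M | ∃ u : n → ℂ, (∑ i, ‖u i‖ ^ 2 = 1) ∧ M = vecMulVec u (star u)}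

lemma proj_mem (u : n → ℂ) :
    vecMulVec u (star u) ∈ Submodule.span ℂ (projSet n) := by
  by_cases h : u = 0
  · subst h
    have h0 : vecMulVec (0 : n → ℂ) (star (0 : n → ℂ)) = 0 := by
      ext x y; simp [vecMulVec_apply]
    rw [h0]; exact Submodule.zero_mem _
  · set r : ℝ := ∑ i, ‖u i‖ ^ 2 with hr
    have hrpos : 0 < r := by
      obtain ⟨i, hi⟩ := Function.ne_iff.1 h
      exact Finset.sum_pos' (fun j _ => by positivity)
        ⟨i, Finset.mem_univ i, by
          have hne : u i ≠ 0 := hi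
          have := norm_pos_iff.2 hne
          positivity⟩
    set s : ℝ := Real.sqrt r with hs
    have hspos : 0 < s := Real.sqrt_pos.2 hrpos
    set u' : n → ℂ := fun i => (s⁻¹ : ℝ) * u i with hu'
    have hunit : ∑ i, ‖u' i‖ ^ 2 = 1 := by
      have he : ∀ i, ‖u' i‖ ^ 2 = s⁻¹ ^ 2 * ‖u i‖ ^ 2 := by
        intro i
        simp [hu', norm_mul, mul_pow, abs_of_pos (inv_pos.2 hspos)]
      rw [Finset.sum_congr rfl fun i _ => he i, ← Finset.mul_sum, ← hr,
        inv_pow, Real.sq_sqrt hrpos.le, inv_mul_cancel₀ hrpos.ne']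
    have key : vecMulVec u (star u) = (r : ℂ) • vecMulVec u' (star u') := by
      ext x y
      simp only [vecMulVec_apply, Matrix.smul_apply, Pi.star_apply, hu', smul_eq_mul]
      rw [show star (((s⁻¹ : ℝ) : ℂ) * u y) = ((s⁻¹ : ℝ) : ℂ) * star (u y) by
        rw [star_mul']; simp [Complex.star_def, Complex.conj_ofReal]]
      have hss : (r : ℂ) * ((s⁻¹ : ℝ) : ℂ) * ((s⁻¹ : ℝ) : ℂ) = 1 := by
        have h1 : (s : ℝ) * s = r := Real.mul_self_sqrt hrpos.le
        have h2 : r * s⁻¹ * s⁻¹ = 1 := by rw [← h1]; field_simp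
        calc (r : ℂ) * ((s⁻¹ : ℝ) : ℂ) * ((s⁻¹ : ℝ) : ℂ)
            = ((r * s⁻¹ * s⁻¹ : ℝ) : ℂ) := by push_cast; ring
          _ = 1 := by rw [h2]; norm_num
      calc u x * star (u y)
          = ((r : ℂ) * ((s⁻¹ : ℝ) : ℂ) * ((s⁻¹ : ℝ) : ℂ)) * (u x * star (u y)) := by
            rw [hss, one_mul]
        _ = (r : ℂ) * (((s⁻¹ : ℝ) : ℂ) * u x * (((s⁻¹ : ℝ) : ℂ) * star (u y))) := by
            ring
    rw [key]
    exact Submodule.smul_mem _ _ (Submodule.subset_span ⟨u', hunit, rfl⟩)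

/-- The auxiliary vectors used to expand a matrix unit. -/
noncomputable def wvec (p q : n) (t : ℕ) : n → ℂ :=
  fun x => Pi.single (M := fun _ => ℂ) p 1 x + Complex.I ^ t * Pi.single (M := fun _ => ℂ) q 1 x

lemma stdBasis_eq (p q : n) :
    Matrix.single p q (1 : ℂ)
      = (4⁻¹ : ℂ) • ∑ t : Fin 4, (Complex.I ^ (t : ℕ)) •
          vecMulVec (wvec p q t) (star (wvec p q t)) := by
  ext x y
  simp only [Matrix.smul_apply, Matrix.sum_apply, Matrix.add_apply, Fin.sum_univ_four,
    smul_eq_mul, vecMulVec_apply, wvec, Pi.star_apply, Complex.star_def, map_add,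
    _root_.map_mul, map_pow, Complex.conj_I, Matrix.single, of_apply, Pi.single_apply,
    _root_.map_one, map_zero, show ((0:Fin 4):ℕ) = 0 from rfl, show ((1:Fin 4):ℕ) = 1 from rfl,
    show ((2:Fin 4):ℕ) = 2 from rfl, show ((3:Fin 4):ℕ) = 3 from rfl]
  norm_num
  split_ifs <;>
    first
      | tauto
      | (norm_num [pow_succ, Complex.I_mul_I]; try ring_nf; try norm_num [Complex.I_sq];
         try ring_nf)

lemma stdBasis_mem (p q : n) :
    Matrix.single p q (1 : ℂ) ∈ Submodule.span ℂ (projSet n) := by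
  rw [stdBasis_eq p q]
  exact Submodule.smul_mem _ _ (Submodule.sum_mem _ fun t _ =>
    Submodule.smul_mem _ _ (proj_mem (wvec p q t)))

lemma mem_span_proj (M : Matrix n n ℂ) : M ∈ Submodule.span ℂ (projSet n) := by
  rw [matrix_eq_sum_single M]
  exact Submodule.sum_mem _ fun i _ => Submodule.sum_mem _ fun j _ => by
    have : Matrix.single i j (M i j) = M i j • Matrix.single i j (1 : ℂ) := by
      simp
    rw [this]
    exact Submodule.smul_mem _ _ (stdBasis_mem i j)

/-- Kronecker products of spans lie in the span of Kronecker products. -/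
lemma kron_mem_span {m : Type*} [Fintype m] [DecidableEq m]
    {S₁ : Set (Matrix m m ℂ)} {S₂ : Set (Matrix n n ℂ)} {A : Matrix m m ℂ} {B : Matrix n n ℂ}
    (hA : A ∈ Submodule.span ℂ S₁) (hB : B ∈ Submodule.span ℂ S₂) :
    A ⊗ₖ B ∈ Submodule.span ℂ {M : Matrix (m × n) (m × n) ℂ |
      ∃ x ∈ S₁, ∃ y ∈ S₂, M = x ⊗ₖ y} := by
  induction hA using Submodule.span_induction with
  | mem x hx =>
    induction hB using Submodule.span_induction with
    | mem y hy => exact Submodule.subset_span ⟨x, hx, y, hy, rfl⟩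
    | zero => rw [kronecker_zero]; exact Submodule.zero_mem _
    | add y z _ _ hy hz => rw [kronecker_add]; exact Submodule.add_mem _ hy hz
    | smul c y _ hy => rw [kronecker_smul]; exact Submodule.smul_mem _ _ hy
  | zero => rw [zero_kronecker]; exact Submodule.zero_mem _
  | add x y _ _ hx hy => rw [add_kronecker]; exact Submodule.add_mem _ hx hy
  | smul c x _ hx => rw [smul_kronecker]; exact Submodule.smul_mem _ _ hx

/-- "Real part" of a matrix. -/
noncomputable def reM {N : Type*} (M : Matrix N N ℂ) : Matrix N N ℂ :=
  (2⁻¹ : ℝ) • (M + Mᴴ)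

lemma reM_smul {N : Type*} (c : ℂ) (M : Matrix N N ℂ) :
    reM (c • M) = c.re • reM M + c.im • reM (Complex.I • M) := by
  ext i j
  simp only [reM, Matrix.smul_apply, Matrix.add_apply, Matrix.conjTranspose_apply,
    Pi.smul_apply, smul_eq_mul, Complex.real_smul, star_smul, Complex.star_def,
    _root_.map_mul, Complex.conj_I]
  have hc : (starRingEnd ℂ) c = (c.re : ℂ) - c.im * Complex.I := by
    rw [Complex.ext_iff]; simp
  have hc' : c = (c.re : ℂ) + c.im * Complex.I := by
    rw [Complex.ext_iff]; simp
  rw [hc]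
  nth_rewrite 1 [hc']
  push_cast
  ring

lemma reM_mem_span {N : Type*} {S : Set (Matrix N N ℂ)} (hS : ∀ M ∈ S, Mᴴ = M) {M}
    (hM : M ∈ Submodule.span ℂ S) :
    reM M ∈ Submodule.span ℝ S ∧ reM (Complex.I • M) ∈ Submodule.span ℝ S := by
  induction hM using Submodule.span_induction with
  | mem x hx =>
    constructor
    · have : reM x = x := by
        rw [reM, hS x hx]
        ext i j
        simp only [Matrix.smul_apply, Matrix.add_apply, Complex.real_smul]
        push_cast
        ring
      rw [this]; exact Submodule.subset_span hx
    · have : reM (Complex.I • x) = 0 := by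
        rw [reM, conjTranspose_smul, hS x hx]
        ext i j
        simp only [Matrix.smul_apply, Matrix.add_apply, Matrix.zero_apply, Pi.smul_apply,
          smul_eq_mul, Complex.real_smul, star_smul, Complex.star_def, Complex.conj_I,
          smul_eq_mul, neg_mul]
        push_cast
        ring
      rw [this]; exact Submodule.zero_mem _
  | zero =>
    have : reM (0 : Matrix N N ℂ) = 0 := by
      rw [reM]; simp
    constructor <;> simp [this, reM, Submodule.zero_mem]
  | add x y _ _ hx hy =>
    have hadd : ∀ u v : Matrix N N ℂ, reM (u + v) = reM u + reM v := by
      intro u v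
      rw [reM, reM, reM, conjTranspose_add, smul_add]
      module
    constructor
    · rw [hadd]; exact Submodule.add_mem _ hx.1 hy.1
    · rw [smul_add, hadd]; exact Submodule.add_mem _ hx.2 hy.2
  | smul c x _ hx =>
    constructor
    · rw [reM_smul]
      exact Submodule.add_mem _ (Submodule.smul_mem _ _ hx.1) (Submodule.smul_mem _ _ hx.2)
    · rw [smul_smul, reM_smul]
      refine Submodule.add_mem _ (Submodule.smul_mem _ _ hx.1) (Submodule.smul_mem _ _ hx.2)

lemma trace_proj (w : n → ℂ) (hw : ∑ i, ‖w i‖ ^ 2 = 1) :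
    (vecMulVec w (star w)).trace = 1 := by
  have h1 : (vecMulVec w (star w)).trace = ∑ i, w i * star (w i) := by
    simp [Matrix.trace, Matrix.diag, vecMulVec_apply]
  have h2 : ∀ i, w i * star (w i) = ((‖w i‖ ^ 2 : ℝ) : ℂ) := by
    intro i
    rw [Complex.star_def, Complex.mul_conj]
    norm_cast
    simp [Complex.normSq_eq_norm_sq]
  rw [h1, Finset.sum_congr rfl fun i _ => h2 i, ← Complex.ofReal_sum, hw, Complex.ofReal_one]

end QPaux

/-- quasi-probability separable expansion: every Hermitian
trace-one operator on `ℂ^a ⊗ ℂ^b` is a quasi-probabilistic mixture of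
tensor products of pure-state projections. -/
theorem herm1_quasiProb_separable_expansion
    (a b : ℕ) (ha : 1 ≤ a) (hb : 1 ≤ b)
    (R : Matrix (Fin a × Fin b) (Fin a × Fin b) ℂ)
    (hHerm : R.IsHermitian) (hTr : R.trace = 1) :
    ∃ (k : ℕ) (u : Fin k → Fin a → ℂ) (v : Fin k → Fin b → ℂ) (P : Fin k → ℝ),
      (∀ j, ∑ i, ‖u j i‖ ^ 2 = 1) ∧
      (∀ j, ∑ i, ‖v j i‖ ^ 2 = 1) ∧
      (∑ j, P j = 1) ∧
      R = ∑ j, (P j : ℂ) •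
          (vecMulVec (u j) (star (u j)) ⊗ₖ vecMulVec (v j) (star (v j))) := by
  classical
  set S : Set (Matrix (Fin a × Fin b) (Fin a × Fin b) ℂ) :=
    {M | ∃ x ∈ QPaux.projSet (Fin a), ∃ y ∈ QPaux.projSet (Fin b), M = x ⊗ₖ y} with hSdef
  -- every element of S is Hermitian
  have hSherm : ∀ M ∈ S, Mᴴ = M := by
    rintro M ⟨x, ⟨u, -, rfl⟩, y, ⟨v, -, rfl⟩, rfl⟩
    ext ⟨i₁, i₂⟩ ⟨j₁, j₂⟩
    simp only [Matrix.conjTranspose_apply, Matrix.kroneckerMap_apply, vecMulVec_apply,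
      Pi.star_apply, _root_.map_mul, Complex.star_def]
    ring_nf
    simp only [Complex.conj_conj]
    ring
  -- R is in the complex span of S
  have hC : R ∈ Submodule.span ℂ S := by
    have h1 : R ∈ Submodule.span ℂ
        {M : Matrix (Fin a × Fin b) (Fin a × Fin b) ℂ |
          ∃ x ∈ QPaux.projSet (Fin a), ∃ y ∈ QPaux.projSet (Fin b), M = x ⊗ₖ y} := by
      rw [matrix_eq_sum_single R]
      refine Submodule.sum_mem _ fun p _ => Submodule.sum_mem _ fun q _ => ?_
      have hsb : Matrix.single p q (R p q) = R p q • Matrix.single p q (1 : ℂ) := by simp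
      rw [hsb]
      refine Submodule.smul_mem _ _ ?_
      have hkron : Matrix.single p q (1 : ℂ)
          = Matrix.single p.1 q.1 (1 : ℂ) ⊗ₖ Matrix.single p.2 q.2 (1 : ℂ) := by
        ext ⟨i₁, i₂⟩ ⟨j₁, j₂⟩
        simp only [Matrix.single, of_apply, Matrix.kroneckerMap_apply]
        by_cases h1 : p.1 = i₁ <;> by_cases h2 : q.1 = j₁ <;>
          by_cases h3 : p.2 = i₂ <;> by_cases h4 : q.2 = j₂ <;>
          simp_all [Prod.ext_iff]
      rw [hkron]
      exact QPaux.kron_mem_span (QPaux.stdBasis_mem p.1 q.1) (QPaux.stdBasis_mem p.2 q.2)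
    exact h1
  -- hence R is in the real span of S
  have hR : R ∈ Submodule.span ℝ S := by
    have h := (QPaux.reM_mem_span hSherm hC).1
    have hre : QPaux.reM R = R := by
      rw [QPaux.reM, hHerm.eq]
      ext i j
      simp only [Matrix.smul_apply, Matrix.add_apply, Complex.real_smul]
      push_cast
      ring
    rwa [hre] at h
  -- extract a finite expansion
  obtain ⟨k, P, g, hsum⟩ := Submodule.mem_span_set'.1 hR
  have hg : ∀ j : Fin k, (g j : Matrix (Fin a × Fin b) (Fin a × Fin b) ℂ) ∈ S :=
    fun j => (g j).2
  choose x hx y hy hxy using hg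
  choose u hu hxu using hx
  choose v hv hyv using hy
  have hRe : R = ∑ j, (P j : ℂ) •
      (vecMulVec (u j) (star (u j)) ⊗ₖ vecMulVec (v j) (star (v j))) := by
    rw [← hsum]
    refine Finset.sum_congr rfl fun j _ => ?_
    rw [hxy j, hxu j, hyv j]
    ext ij kl
    simp [Matrix.smul_apply, Complex.real_smul]
  have htr : (1 : ℂ) = ∑ j, (P j : ℂ) := by
    calc (1 : ℂ) = R.trace := hTr.symm
      _ = ∑ j, ((P j : ℂ) • (vecMulVec (u j) (star (u j)) ⊗ₖ
            vecMulVec (v j) (star (v j)))).trace := by rw [hRe, trace_sum]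
      _ = ∑ j, (P j : ℂ) := by
          refine Finset.sum_congr rfl fun j _ => ?_
          rw [trace_smul, trace_kronecker, QPaux.trace_proj (u j) (hu j),
            QPaux.trace_proj (v j) (hv j), one_mul, smul_eq_mul, mul_one]
  have hsum1 : ∑ j, P j = 1 := by
    have : ((∑ j, P j : ℝ) : ℂ) = 1 := by push_cast [htr.symm]; rfl
    exact_mod_cast this
  exact ⟨k, u, v, P, hu, hv, hsum1, hRe⟩
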